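/- Let C be a binary linear code. Then ρ_maxfrac(C) ≥ ρ_AWGNC(C) ≥ ρ_BEC(C) and ρ_maxfrac(C) ≥ ρ_BSC(C) ≥ ρ_BEC(C), as elements of ℕ ∪ {∞}. -/

import Mathlib

open Matrix BigOperators Finset

section Defs

variable {J I : Type*} [Fintype J] [Fintype I] [DecidableEq I]

/-- The support of row `j` of a binary matrix `H`. -/
def rowSupp (H : Matrix J I (ZMod 2)) (j : J) : Finset I :=
  Finset.univ.filter fun i => H j i = 1

/-- The fundamental cone of a binary matrix `H`. -/
def fundCone (H : Matrix J I (ZMod 2)) : Set (I → ℝ) :=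
  {x | (∀ i, 0 ≤ x i) ∧
    ∀ j : J, ∀ ℓ ∈ rowSupp H j, x ℓ ≤ ∑ i ∈ (rowSupp H j).erase ℓ, x i}

/-- BEC pseudoweight: size of the support. -/
noncomputable def wBEC (x : I → ℝ) : ℝ := ({i | x i ≠ 0}.ncard : ℝ)

/-- AWGNC pseudoweight. -/
noncomputable def wAWGNC (x : I → ℝ) : ℝ := (∑ i, x i) ^ 2 / ∑ i, x i ^ 2

/-- Max-fractional weight. -/
noncomputable def wMaxFrac (x : I → ℝ) : ℝ := (∑ i, x i) / sSup (Set.range x)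

/-- `H` is a parity-check matrix of the code `C`. -/
def IsParityCheck (H : Matrix J I (ZMod 2)) (C : Submodule (ZMod 2) (I → ZMod 2)) : Prop :=
  ∀ c, c ∈ C ↔ H.mulVec c = 0

/-- Minimum Hamming distance of a code. -/
noncomputable def minDist (C : Submodule (ZMod 2) (I → ZMod 2)) : ℕ :=
  sInf {d | ∃ c ∈ C, c ≠ 0 ∧ hammingNorm c = d}

/-- Minimum pseudoweight of `H` w.r.t. pseudoweight function `w`:
the infimum of `w` over all nonzero pseudocodewords (`⊤` if there are none). -/
noncomputable def minPW (w : (I → ℝ) → ℝ) (H : Matrix J I (ZMod 2)) : EReal :=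
  sInf ((fun x => (w x : EReal)) '' (fundCone H \ {0}))

/-- The chain (connectivity) relation associated with a binary matrix whose rows
have weight 2: `i` and `i'` are related iff they are equal or joined by a chain of rows
whose supports are exactly consecutive pairs. -/
def chainRel (H : Matrix J I (ZMod 2)) (i i' : I) : Prop :=
  i = i' ∨ ∃ ℓ : ℕ, 1 ≤ ℓ ∧ ∃ (c : Fin (ℓ + 1) → I) (r : Fin ℓ → J),
    c 0 = i ∧ c (Fin.last ℓ) = i' ∧
    ∀ t : Fin ℓ, rowSupp H (r t) = {c t.castSucc, c t.succ}

/-- The 0-1 real matrix associated with a binary matrix. -/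
def toRealMatrix (H : Matrix J I (ZMod 2)) : Matrix J I ℝ :=
  Matrix.of fun j i => if H j i = 1 then (1 : ℝ) else 0

/-- The Tanner graph of a binary matrix. -/
def tannerGraph (H : Matrix J I (ZMod 2)) : SimpleGraph (J ⊕ I) :=
  SimpleGraph.fromRel fun u v => ∃ j i, u = Sum.inl j ∧ v = Sum.inr i ∧ H j i = 1

end Defs

/-- The multiset of (real) eigenvalues, with multiplicity, of a real square matrix:
the real roots of its characteristic polynomial. -/
noncomputable def eigMult {ι : Type*} [Fintype ι] [DecidableEq ι] (A : Matrix ι ι ℝ) :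
    Multiset ℝ :=
  A.charpoly.roots

section FinDefs

variable {n : ℕ}

/-- The non-increasing rearrangement of a real vector. -/
noncomputable def sortDesc (x : Fin n → ℝ) : Fin n → ℝ :=
  fun i => x (Tuple.sort (fun j => -x j) i)

/-- `Φ(ξ) = ∫₀^ξ φ`, where `φ(ξ) = x'_i` for `i - 1 < ξ ≤ i` and `x'` is the
non-increasing rearrangement of `x`. -/
noncomputable def bigPhi (x : Fin n → ℝ) (ξ : ℝ) : ℝ :=
  ∑ i : Fin n, sortDesc x i * min 1 (max 0 (ξ - (i : ℝ)))

/-- BSC pseudoweight: `2 Φ⁻¹(Φ(n)/2)`. -/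
noncomputable def wBSC (x : Fin n → ℝ) : ℝ :=
  2 * sInf {ξ : ℝ | bigPhi x (n : ℝ) / 2 ≤ bigPhi x ξ}

/-- The pseudocodeword redundancy of a code `C` w.r.t. the pseudoweight function `w`:
the smallest number of rows of a parity-check matrix `H` of `C` whose minimum
pseudoweight equals the minimum distance of `C` (`⊤` if there is no such matrix). -/
noncomputable def pcRedundancy (w : (Fin n → ℝ) → ℝ)
    (C : Submodule (ZMod 2) (Fin n → ZMod 2)) : ℕ∞ :=
  sInf {k : ℕ∞ | ∃ (m : ℕ) (H : Matrix (Fin m) (Fin n) (ZMod 2)),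
    k = (m : ℕ∞) ∧ IsParityCheck H C ∧ minPW w H = ((minDist C : ℝ) : EReal)}

end FinDefs

open Finset

lemma ramp_tele (ξ t : ℝ) : min 1 (max 0 (ξ - t)) = min ξ (t + 1) - min ξ t := by
  simp only [min_def, max_def]
  split_ifs <;> linarith

lemma ramp_refl (s : ℝ) : min 1 (max 0 s) + min 1 (max 0 (1 - s)) = 1 := by
  simp only [min_def, max_def]
  split_ifs <;> linarith

lemma ramp_anti (ξ : ℝ) {s t : ℝ} (h : s ≤ t) :
    min 1 (max 0 (ξ - t)) ≤ min 1 (max 0 (ξ - s)) :=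
  min_le_min le_rfl (max_le_max le_rfl (by linarith))

lemma ramp_nonneg (ξ t : ℝ) : 0 ≤ min 1 (max 0 (ξ - t)) :=
  le_min one_pos.le (le_max_left _ _)

lemma ramp_le_one (ξ t : ℝ) : min 1 (max 0 (ξ - t)) ≤ 1 := min_le_left _ _

lemma sum_ramp (ξ : ℝ) (m : ℕ) :
    ∑ i ∈ range m, min 1 (max 0 (ξ - (i : ℝ))) = min ξ m - min ξ 0 := by
  have h := Finset.sum_range_sub (fun i : ℕ => min ξ (i : ℝ)) m
  simp only [Nat.cast_zero] at h
  rw [← h]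
  apply Finset.sum_congr rfl
  intro i _
  rw [ramp_tele]
  push_cast
  ring_nf

lemma sum_ramp_le (ξ : ℝ) (m : ℕ) :
    ∑ i ∈ range m, min 1 (max 0 (ξ - (i : ℝ))) ≤ max 0 ξ := by
  rw [sum_ramp]
  have hm : (0:ℝ) ≤ m := Nat.cast_nonneg m
  simp only [min_def, max_def]
  split_ifs <;> linarith

section SortDesc
variable {n : ℕ}

lemma sortDesc_nonneg {x : Fin n → ℝ} (hx : ∀ i, 0 ≤ x i) (i : Fin n) :
    0 ≤ sortDesc x i := hx _

lemma sortDesc_anti (x : Fin n → ℝ) : Antitone (sortDesc x) := by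
  intro a b hab
  have h := Tuple.monotone_sort (fun j => -x j) hab
  simp only [Function.comp_apply] at h
  simp only [sortDesc]
  linarith

lemma sortDesc_sum (x : Fin n → ℝ) : ∑ i, sortDesc x i = ∑ i, x i :=
  Equiv.sum_comp (Tuple.sort fun j => -x j) x

lemma sortDesc_mem_range (x : Fin n → ℝ) (i : Fin n) : sortDesc x i ∈ Set.range x :=
  ⟨_, rfl⟩

lemma card_supp_sortDesc (x : Fin n → ℝ) :
    #(univ.filter fun i => sortDesc x i ≠ 0) = #(univ.filter fun i => x i ≠ 0) := by
  apply Finset.card_bij' (fun i _ => Tuple.sort (fun j => -x j) i)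
    (fun i _ => (Tuple.sort (fun j => -x j)).symm i)
  · intro a ha
    simp only [mem_filter, mem_univ, true_and] at ha ⊢
    exact ha
  · intro a ha
    simp only [mem_filter, mem_univ, true_and, sortDesc] at ha ⊢
    exact Finset.mem_filter.mpr ⟨mem_univ _, by simpa using ha⟩
  · intro a _; simp
  · intro a _; simp

lemma sortDesc_eq_zero {x : Fin n → ℝ} (hx : ∀ i, 0 ≤ x i) {i : Fin n}
    (hi : #(univ.filter fun i => x i ≠ 0) ≤ (i : ℕ)) : sortDesc x i = 0 := by
  by_contra h
  have hsub : Finset.Iic i ⊆ univ.filter (fun j => sortDesc x j ≠ 0) := by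
    intro j hj
    simp only [Finset.mem_Iic] at hj
    simp only [mem_filter, mem_univ, true_and]
    intro hz
    have h1 : sortDesc x i ≤ sortDesc x j := sortDesc_anti x hj
    have h2 : 0 ≤ sortDesc x i := sortDesc_nonneg hx i
    exact h (le_antisymm (by linarith [hz ▸ h1]) h2 ▸ rfl)
  have hcard := Finset.card_le_card hsub
  rw [Fin.card_Iic, card_supp_sortDesc] at hcard
  omega

/-- Extension of the sorted vector to `ℕ`. -/
noncomputable def vnat (x : Fin n → ℝ) : ℕ → ℝ :=
  fun i => if h : i < n then sortDesc x ⟨i, h⟩ else 0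

lemma vnat_nonneg {x : Fin n → ℝ} (hx : ∀ i, 0 ≤ x i) (i : ℕ) : 0 ≤ vnat x i := by
  unfold vnat; split_ifs
  · exact sortDesc_nonneg hx _
  · exact le_rfl

lemma vnat_anti {x : Fin n → ℝ} (hx : ∀ i, 0 ≤ x i) : Antitone (vnat x) := by
  intro a b hab
  unfold vnat
  split_ifs with h1 h2 h2
  · exact sortDesc_anti x (Fin.mk_le_mk.mpr hab)
  · omega
  · exact sortDesc_nonneg hx _
  · exact le_rfl

lemma vnat_eq_zero {x : Fin n → ℝ} (hx : ∀ i, 0 ≤ x i) {i : ℕ}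
    (hi : #(univ.filter fun i => x i ≠ 0) ≤ i) : vnat x i = 0 := by
  unfold vnat; split_ifs with h
  · exact sortDesc_eq_zero hx hi
  · rfl

lemma bigPhi_eq (x : Fin n → ℝ) (ξ : ℝ) :
    bigPhi x ξ = ∑ i ∈ range n, vnat x i * min 1 (max 0 (ξ - (i : ℝ))) := by
  rw [bigPhi, ← Fin.sum_univ_eq_sum_range (fun i : ℕ => vnat x i * min 1 (max 0 (ξ - (i : ℝ)))) n]
  apply Finset.sum_congr rfl
  intro i _
  congr 1
  simp [vnat, i.isLt]

end SortDesc

section Ineqs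
variable {n : ℕ}

lemma wBEC_eq (x : Fin n → ℝ) :
    wBEC x = (#(univ.filter fun i => x i ≠ 0) : ℝ) := by
  unfold wBEC
  congr 1
  rw [Set.ncard_eq_toFinset_card', Set.toFinset_setOf]

lemma exists_pos {x : Fin n → ℝ} (hx0 : ∀ i, 0 ≤ x i) (hne : x ≠ 0) : ∃ i, 0 < x i := by
  by_contra h
  push_neg at h
  exact hne (funext fun i => le_antisymm (h i) (hx0 i))

lemma le_sSup_range (x : Fin n → ℝ) (i : Fin n) : x i ≤ sSup (Set.range x) :=
  le_csSup (Set.finite_range x).bddAbove ⟨i, rfl⟩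

lemma vnat_le_sup {x : Fin n → ℝ} (hM : 0 ≤ sSup (Set.range x)) (i : ℕ) :
    vnat x i ≤ sSup (Set.range x) := by
  unfold vnat; split_ifs
  · exact le_sSup_range x _
  · exact hM

lemma sum_vnat (x : Fin n → ℝ) : ∑ i ∈ range n, vnat x i = ∑ i, x i := by
  rw [← sortDesc_sum x, ← Fin.sum_univ_eq_sum_range (vnat x) n]
  apply Finset.sum_congr rfl
  intro i _
  simp [vnat, i.isLt]

lemma sum_pos_of_ne {x : Fin n → ℝ} (hx0 : ∀ i, 0 ≤ x i) (hne : x ≠ 0) :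
    0 < ∑ i, x i := by
  obtain ⟨i₀, hi₀⟩ := exists_pos hx0 hne
  exact Finset.sum_pos' (fun i _ => hx0 i) ⟨i₀, mem_univ i₀, hi₀⟩

lemma sup_pos_of_ne {x : Fin n → ℝ} (hx0 : ∀ i, 0 ≤ x i) (hne : x ≠ 0) :
    0 < sSup (Set.range x) := by
  obtain ⟨i₀, hi₀⟩ := exists_pos hx0 hne
  exact lt_of_lt_of_le hi₀ (le_sSup_range x i₀)

lemma sup_le_sum {x : Fin n → ℝ} (hx0 : ∀ i, 0 ≤ x i) (hne : x ≠ 0) :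
    sSup (Set.range x) ≤ ∑ i, x i := by
  obtain ⟨i₀, hi₀⟩ := exists_pos hx0 hne
  have : Nonempty (Fin n) := ⟨i₀⟩
  apply csSup_le (Set.range_nonempty x)
  rintro y ⟨i, rfl⟩
  exact Finset.single_le_sum (fun j _ => hx0 j) (mem_univ i)

lemma one_le_wMaxFrac {x : Fin n → ℝ} (hx0 : ∀ i, 0 ≤ x i) (hne : x ≠ 0) :
    1 ≤ wMaxFrac x := by
  unfold wMaxFrac
  rw [le_div_iff₀ (sup_pos_of_ne hx0 hne), one_mul]
  exact sup_le_sum hx0 hne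

lemma wMaxFrac_le_wAWGNC {x : Fin n → ℝ} (hx0 : ∀ i, 0 ≤ x i) (hne : x ≠ 0) :
    wMaxFrac x ≤ wAWGNC x := by
  obtain ⟨i₀, hi₀⟩ := exists_pos hx0 hne
  have hM : 0 < sSup (Set.range x) := sup_pos_of_ne hx0 hne
  have hQ : 0 < ∑ i, x i ^ 2 :=
    Finset.sum_pos' (fun i _ => sq_nonneg _) ⟨i₀, mem_univ i₀, by positivity⟩
  have hS : 0 < ∑ i, x i := sum_pos_of_ne hx0 hne
  have hQle : ∑ i, x i ^ 2 ≤ (∑ i, x i) * sSup (Set.range x) := by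
    rw [Finset.sum_mul]
    apply Finset.sum_le_sum
    intro i _
    have := le_sSup_range x i
    nlinarith [hx0 i]
  unfold wMaxFrac wAWGNC
  rw [div_le_div_iff₀ hM hQ]
  nlinarith

lemma wAWGNC_le_wBEC {x : Fin n → ℝ} (hx0 : ∀ i, 0 ≤ x i) (hne : x ≠ 0) :
    wAWGNC x ≤ wBEC x := by
  obtain ⟨i₀, hi₀⟩ := exists_pos hx0 hne
  have hQ : 0 < ∑ i, x i ^ 2 :=
    Finset.sum_pos' (fun i _ => sq_nonneg _) ⟨i₀, mem_univ i₀, by positivity⟩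
  set s := univ.filter fun i => x i ≠ 0 with hs
  have hSsum : ∑ i ∈ s, x i = ∑ i, x i := Finset.sum_filter_ne_zero univ
  have hQsum : ∑ i ∈ s, x i ^ 2 = ∑ i, x i ^ 2 := by
    apply Finset.sum_subset (Finset.subset_univ s)
    intro i _ hi
    simp only [hs, mem_filter, mem_univ, true_and, not_not] at hi
    simp [hi]
  have cs := sq_sum_le_card_mul_sum_sq (s := s) (f := x)
  rw [hSsum, hQsum] at cs
  rw [wBEC_eq, wAWGNC, div_le_iff₀ hQ]
  exact_mod_cast cs

lemma bigPhi_n_eq (x : Fin n → ℝ) : bigPhi x n = ∑ i, x i := by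
  unfold bigPhi
  rw [← sortDesc_sum x]
  apply Finset.sum_congr rfl
  intro i _
  have hi : ((i : ℕ) : ℝ) + 1 ≤ (n : ℝ) := by exact_mod_cast i.isLt
  rw [max_eq_right (by linarith), min_eq_left (by linarith), mul_one]

lemma bigPhi_le_sup {x : Fin n → ℝ} (hM : 0 ≤ sSup (Set.range x)) (ξ : ℝ) :
    bigPhi x ξ ≤ sSup (Set.range x) * max 0 ξ := by
  rw [bigPhi_eq]
  calc ∑ i ∈ range n, vnat x i * min 1 (max 0 (ξ - (i:ℝ)))
      ≤ ∑ i ∈ range n, sSup (Set.range x) * min 1 (max 0 (ξ - (i:ℝ))) := by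
        apply Finset.sum_le_sum
        intro i _
        exact mul_le_mul_of_nonneg_right (vnat_le_sup hM i) (ramp_nonneg _ _)
    _ = sSup (Set.range x) * ∑ i ∈ range n, min 1 (max 0 (ξ - (i:ℝ))) := by
        rw [Finset.mul_sum]
    _ ≤ sSup (Set.range x) * max 0 ξ :=
        mul_le_mul_of_nonneg_left (sum_ramp_le ξ n) hM

lemma sum_le_two_bigPhi_half {x : Fin n → ℝ} (hx0 : ∀ i, 0 ≤ x i) :
    ∑ i, x i ≤ 2 * bigPhi x ((#(univ.filter fun i => x i ≠ 0) : ℝ) / 2) := by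
  set k := #(univ.filter fun i => x i ≠ 0) with hk
  have hkn : k ≤ n := le_trans (Finset.card_filter_le _ _) (by simp)
  set A : ℕ → ℝ := fun i => min 1 (max 0 ((k:ℝ)/2 - (i:ℝ))) with hA
  have hsub : range k ⊆ range n := Finset.range_subset_range.mpr hkn
  have hzero : ∀ i ∈ range n, i ∉ range k → vnat x i = 0 := by
    intro i _ hni
    simp only [Finset.mem_range, not_lt] at hni
    exact vnat_eq_zero hx0 hni
  have hsum : ∑ i, x i = ∑ i ∈ range k, vnat x i := by
    rw [← sum_vnat x]
    exact (Finset.sum_subset hsub hzero).symm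
  have hPhi : bigPhi x ((k:ℝ)/2) = ∑ i ∈ range k, vnat x i * A i := by
    rw [bigPhi_eq]
    exact (Finset.sum_subset hsub
      (fun i hi hni => by rw [hzero i hi hni, zero_mul])).symm
  rw [hsum, hPhi]
  set F : ℕ → ℝ := fun i => 2 * (vnat x i * A i) - vnat x i with hF
  have key : 0 ≤ ∑ i ∈ range k, F i := by
    have h2 : ∑ i ∈ range k, (F i + F (k - 1 - i)) = 2 * ∑ i ∈ range k, F i := by
      rw [Finset.sum_add_distrib, Finset.sum_range_reflect]
      ring
    have h3 : 0 ≤ ∑ i ∈ range k, (F i + F (k - 1 - i)) := by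
      apply Finset.sum_nonneg
      intro i hi
      rw [Finset.mem_range] at hi
      set j := k - 1 - i with hjdef
      have hij : j + i + 1 = k := by omega
      have hjR : (j : ℝ) = (k : ℝ) - 1 - (i : ℝ) := by
        have h := congrArg (fun m : ℕ => (m : ℝ)) hij
        push_cast at h
        linarith
      have hAj : A j = 1 - A i := by
        have harg : (k:ℝ)/2 - (j:ℝ) = 1 - ((k:ℝ)/2 - (i:ℝ)) := by rw [hjR]; ring
        have hr := ramp_refl ((k:ℝ)/2 - (i:ℝ))
        simp only [hA]
        rw [harg]
        linarith
      have he : F i + F j = (vnat x i - vnat x j) * (2 * A i - 1) := by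
        simp only [hF]
        rw [hAj]
        ring
      rw [he]
      rcases le_total i j with hle | hle
      · apply mul_nonneg (sub_nonneg.mpr (vnat_anti hx0 hle))
        have hAle : A j ≤ A i := ramp_anti _ (by exact_mod_cast hle)
        rw [hAj] at hAle
        linarith
      · have h1 : vnat x i - vnat x j ≤ 0 := sub_nonpos.mpr (vnat_anti hx0 hle)
        have hAle : A i ≤ A j := ramp_anti _ (by exact_mod_cast hle)
        rw [hAj] at hAle
        nlinarith
    linarith
  have hexp : ∑ i ∈ range k, F i
      = 2 * ∑ i ∈ range k, vnat x i * A i - ∑ i ∈ range k, vnat x i := by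
    simp only [hF]
    rw [Finset.sum_sub_distrib, ← Finset.mul_sum]
  rw [hexp] at key
  linarith

lemma wMaxFrac_le_wBSC {x : Fin n → ℝ} (hx0 : ∀ i, 0 ≤ x i) (hne : x ≠ 0) :
    wMaxFrac x ≤ wBSC x := by
  have hS : 0 < ∑ i, x i := sum_pos_of_ne hx0 hne
  have hM : 0 < sSup (Set.range x) := sup_pos_of_ne hx0 hne
  set S := ∑ i, x i with hSdef
  set M := sSup (Set.range x) with hMdef
  set Z := {ξ : ℝ | bigPhi x n / 2 ≤ bigPhi x ξ} with hZ
  have hPhin : bigPhi x n = S := bigPhi_n_eq x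
  have hZn : (n:ℝ) ∈ Z := by
    simp only [hZ, Set.mem_setOf_eq, hPhin]
    linarith
  have hlb : ∀ ξ ∈ Z, S / (2*M) ≤ ξ := by
    intro ξ hξ
    simp only [hZ, Set.mem_setOf_eq, hPhin] at hξ
    have h2 : bigPhi x ξ ≤ M * max 0 ξ := bigPhi_le_sup hM.le ξ
    rcases le_total ξ 0 with h | h
    · rw [max_eq_left h] at h2
      nlinarith
    · rw [max_eq_right h] at h2
      rw [div_le_iff₀ (by positivity)]
      nlinarith
  have hinf : S / (2*M) ≤ sInf Z := le_csInf ⟨(n:ℝ), hZn⟩ hlb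
  unfold wBSC wMaxFrac
  rw [← hSdef, ← hMdef]
  have heq : S / (2*M) = S / M / 2 := by ring
  change S / M ≤ 2 * sInf Z
  linarith [heq ▸ hinf]

lemma wBSC_le_wBEC {x : Fin n → ℝ} (hx0 : ∀ i, 0 ≤ x i) (hne : x ≠ 0) :
    wBSC x ≤ wBEC x := by
  have hS : 0 < ∑ i, x i := sum_pos_of_ne hx0 hne
  have hM : 0 < sSup (Set.range x) := sup_pos_of_ne hx0 hne
  set S := ∑ i, x i with hSdef
  set M := sSup (Set.range x) with hMdef
  set k := #(univ.filter fun i => x i ≠ 0) with hk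
  set Z := {ξ : ℝ | bigPhi x n / 2 ≤ bigPhi x ξ} with hZ
  have hPhin : bigPhi x n = S := bigPhi_n_eq x
  have hlb : ∀ ξ ∈ Z, S / (2*M) ≤ ξ := by
    intro ξ hξ
    simp only [hZ, Set.mem_setOf_eq, hPhin] at hξ
    have h2 : bigPhi x ξ ≤ M * max 0 ξ := bigPhi_le_sup hM.le ξ
    rcases le_total ξ 0 with h | h
    · rw [max_eq_left h] at h2
      nlinarith
    · rw [max_eq_right h] at h2
      rw [div_le_iff₀ (by positivity)]
      nlinarith
  have hBdd : BddBelow Z := ⟨S/(2*M), hlb⟩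
  have hmem : ((k:ℝ)/2) ∈ Z := by
    simp only [hZ, Set.mem_setOf_eq, hPhin]
    have := sum_le_two_bigPhi_half hx0
    rw [← hk, ← hSdef] at this
    linarith
  have hinf : sInf Z ≤ (k:ℝ)/2 := csInf_le hBdd hmem
  rw [wBEC_eq, ← hk]
  unfold wBSC
  change 2 * sInf Z ≤ (k:ℝ)
  linarith

end Ineqs

section Indicator
variable {n : ℕ}

lemma zmod2_cases (a : ZMod 2) : a = 0 ∨ a = 1 := by revert a; decide

/-- The 0-1 real indicator vector of a binary vector. -/
def indR (c : Fin n → ZMod 2) : Fin n → ℝ := fun i => if c i = 1 then 1 else 0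

lemma indR_nonneg (c : Fin n → ZMod 2) (i : Fin n) : 0 ≤ indR c i := by
  unfold indR; split_ifs <;> norm_num

lemma indR_ne_zero {c : Fin n → ZMod 2} (hc : c ≠ 0) : indR c ≠ 0 := by
  have : ∃ i, c i ≠ 0 := by
    by_contra h
    push_neg at h
    exact hc (funext h)
  obtain ⟨i, hi⟩ := this
  have hci : c i = 1 := (zmod2_cases (c i)).resolve_left hi
  intro h
  have := congrFun h i
  simp [indR, hci] at this

lemma indR_supp (c : Fin n → ZMod 2) :
    (univ.filter fun i => indR c i ≠ 0) = (univ.filter fun i => c i ≠ 0) := by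
  apply Finset.filter_congr
  intro i _
  rcases zmod2_cases (c i) with h | h <;> simp [indR, h]

lemma sum_indR (c : Fin n → ZMod 2) : ∑ i, indR c i = (hammingNorm c : ℝ) := by
  unfold indR
  rw [Finset.sum_boole]
  have hf : (univ.filter fun i => c i = 1) = (univ.filter fun i => c i ≠ 0) :=
    Finset.filter_congr fun i _ => by rcases zmod2_cases (c i) with h | h <;> simp [h]
  rw [hf]
  rfl

lemma sup_indR {c : Fin n → ZMod 2} (hc : c ≠ 0) : sSup (Set.range (indR c)) = 1 := by
  have : ∃ i, c i ≠ 0 := by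
    by_contra h
    push_neg at h
    exact hc (funext h)
  obtain ⟨i, hi⟩ := this
  have hci : c i = 1 := (zmod2_cases (c i)).resolve_left hi
  have : Nonempty (Fin n) := ⟨i⟩
  apply le_antisymm
  · apply csSup_le (Set.range_nonempty _)
    rintro y ⟨j, rfl⟩
    unfold indR; split_ifs <;> norm_num
  · apply le_csSup (Set.finite_range _).bddAbove
    exact ⟨i, by simp [indR, hci]⟩

lemma wBEC_indR {c : Fin n → ZMod 2} (hc : c ≠ 0) : wBEC (indR c) = (hammingNorm c : ℝ) := by
  rw [wBEC_eq, indR_supp]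
  rfl

lemma wMaxFrac_indR {c : Fin n → ZMod 2} (hc : c ≠ 0) :
    wMaxFrac (indR c) = (hammingNorm c : ℝ) := by
  unfold wMaxFrac
  rw [sup_indR hc, sum_indR, div_one]

lemma wAWGNC_indR {c : Fin n → ZMod 2} (hc : c ≠ 0) :
    wAWGNC (indR c) = (hammingNorm c : ℝ) := by
  have hsq : ∑ i, indR c i ^ 2 = ∑ i, indR c i := by
    apply Finset.sum_congr rfl
    intro i _
    unfold indR; split_ifs <;> norm_num
  have hk : (hammingNorm c : ℝ) ≠ 0 := by
    simp only [ne_eq, Nat.cast_eq_zero]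
    rw [hammingNorm_eq_zero]
    exact hc
  unfold wAWGNC
  rw [hsq, sum_indR, sq, mul_div_assoc, div_self hk, mul_one]

lemma wBSC_indR {c : Fin n → ZMod 2} (hc : c ≠ 0) :
    wBSC (indR c) = (hammingNorm c : ℝ) := by
  have h0 := indR_nonneg c
  have hne := indR_ne_zero hc
  have h1 := wMaxFrac_le_wBSC h0 hne
  have h2 := wBSC_le_wBEC h0 hne
  rw [wMaxFrac_indR hc] at h1
  rw [wBEC_indR hc] at h2
  linarith

lemma one_le_wAWGNC {x : Fin n → ℝ} (hx0 : ∀ i, 0 ≤ x i) (hne : x ≠ 0) : 1 ≤ wAWGNC x :=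
  le_trans (one_le_wMaxFrac hx0 hne) (wMaxFrac_le_wAWGNC hx0 hne)

lemma one_le_wBSC {x : Fin n → ℝ} (hx0 : ∀ i, 0 ≤ x i) (hne : x ≠ 0) : 1 ≤ wBSC x :=
  le_trans (one_le_wMaxFrac hx0 hne) (wMaxFrac_le_wBSC hx0 hne)

lemma indR_mem_cone {m : ℕ} {H : Matrix (Fin m) (Fin n) (ZMod 2)} {c : Fin n → ZMod 2}
    (hc : H.mulVec c = 0) : indR c ∈ fundCone H := by
  constructor
  · exact indR_nonneg c
  · intro j ℓ hℓ
    rcases zmod2_cases (c ℓ) with h | h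
    · have hz : indR c ℓ = 0 := by simp [indR, h]
      rw [hz]
      exact Finset.sum_nonneg fun i _ => indR_nonneg c i
    · have hj : ∑ i, H j i * c i = 0 := by
        have := congrFun hc j
        rwa [Matrix.mulVec, dotProduct] at this
      have hrow : ∑ i ∈ rowSupp H j, c i = 0 := by
        calc ∑ i ∈ rowSupp H j, c i = ∑ i ∈ rowSupp H j, H j i * c i := by
              apply Finset.sum_congr rfl
              intro i hi
              rw [(Finset.mem_filter.mp hi).2, one_mul]
          _ = ∑ i, H j i * c i := by
              apply Finset.sum_subset (Finset.subset_univ _)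
              intro i _ hi
              rcases zmod2_cases (H j i) with h0 | h1
              · rw [h0, zero_mul]
              · have hmem : i ∈ rowSupp H j := by simp [rowSupp, h1]
                exact absurd hmem hi
          _ = 0 := hj
      have hsum : ∑ i ∈ (rowSupp H j).erase ℓ, c i = 1 := by
        rw [← Finset.add_sum_erase _ c hℓ, h] at hrow
        rcases zmod2_cases (∑ i ∈ (rowSupp H j).erase ℓ, c i) with hz | ho
        · rw [hz] at hrow
          exact absurd hrow (by decide)
        · exact ho
      have hex : ∃ i ∈ (rowSupp H j).erase ℓ, c i ≠ 0 := by
        by_contra hno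
        push_neg at hno
        rw [Finset.sum_eq_zero hno] at hsum
        exact absurd hsum (by decide)
      obtain ⟨i₂, hi₂, hci₂⟩ := hex
      have hc2 : c i₂ = 1 := (zmod2_cases (c i₂)).resolve_left hci₂
      have hx1 : indR c ℓ = 1 := by simp [indR, h]
      rw [hx1]
      calc (1:ℝ) = indR c i₂ := by simp [indR, hc2]
        _ ≤ ∑ i ∈ (rowSupp H j).erase ℓ, indR c i :=
            Finset.single_le_sum (fun i _ => indR_nonneg c i) hi₂

end Indicator

section MPW
variable {J I : Type*} [Fintype J] [Fintype I] [DecidableEq I]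

lemma minPW_le {w : (I → ℝ) → ℝ} {H : Matrix J I (ZMod 2)} {x : I → ℝ}
    (hx : x ∈ fundCone H) (hx0 : x ≠ 0) : minPW w H ≤ (w x : EReal) :=
  sInf_le ⟨x, ⟨hx, hx0⟩, rfl⟩

lemma minPW_mono {w₁ w₂ : (I → ℝ) → ℝ} {H : Matrix J I (ZMod 2)}
    (h : ∀ x ∈ (fundCone H \ {0} : Set (I → ℝ)), w₁ x ≤ w₂ x) :
    minPW w₁ H ≤ minPW w₂ H := by
  apply le_sInf
  rintro b ⟨x, hx, rfl⟩
  exact le_trans (sInf_le ⟨x, hx, rfl⟩) (EReal.coe_le_coe_iff.mpr (h x hx))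

lemma minPW_ge_one {w : (I → ℝ) → ℝ} {H : Matrix J I (ZMod 2)}
    (h : ∀ x ∈ (fundCone H \ {0} : Set (I → ℝ)), 1 ≤ w x) :
    (1 : EReal) ≤ minPW w H := by
  apply le_sInf
  rintro b ⟨x, hx, rfl⟩
  have : ((1:ℝ) : EReal) ≤ (w x : EReal) := EReal.coe_le_coe_iff.mpr (h x hx)
  simpa using this

end MPW

lemma key_red {n : ℕ} (C : Submodule (ZMod 2) (Fin n → ZMod 2)) (w₁ w₂ : (Fin n → ℝ) → ℝ)
    (h12 : ∀ x : Fin n → ℝ, (∀ i, 0 ≤ x i) → x ≠ 0 → w₁ x ≤ w₂ x)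
    (h1 : ∀ x : Fin n → ℝ, (∀ i, 0 ≤ x i) → x ≠ 0 → 1 ≤ w₁ x)
    (h2ind : ∀ c : Fin n → ZMod 2, c ≠ 0 → w₂ (indR c) = (hammingNorm c : ℝ)) :
    pcRedundancy w₂ C ≤ pcRedundancy w₁ C := by
  apply sInf_le_sInf
  rintro k ⟨m, H, rfl, hpc, hmin⟩
  refine ⟨m, H, rfl, hpc, ?_⟩
  have hcp : ∀ x ∈ (fundCone H \ {0} : Set (Fin n → ℝ)), (∀ i, 0 ≤ x i) ∧ x ≠ 0 := by
    rintro x ⟨hx, hx0⟩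
    exact ⟨hx.1, hx0⟩
  have hone : (1 : EReal) ≤ minPW w₁ H :=
    minPW_ge_one (fun x hx => h1 x (hcp x hx).1 (hcp x hx).2)
  have hSne : {d | ∃ c ∈ C, c ≠ 0 ∧ hammingNorm c = d}.Nonempty := by
    by_contra hcon
    rw [Set.not_nonempty_iff_eq_empty] at hcon
    have hd0 : minDist C = 0 := by rw [minDist, hcon, Nat.sInf_empty]
    rw [hd0] at hmin
    rw [hmin] at hone
    simp only [Nat.cast_zero, EReal.coe_zero] at hone
    exact absurd hone (by norm_num)
  obtain ⟨c, hcC, hc0, hcd⟩ := Nat.sInf_mem hSne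
  have hcH : H.mulVec c = 0 := (hpc c).mp hcC
  have hub : minPW w₂ H ≤ ((minDist C : ℝ) : EReal) := by
    have hle := minPW_le (w := w₂) (indR_mem_cone hcH) (indR_ne_zero hc0)
    rw [h2ind c hc0] at hle
    have : hammingNorm c = minDist C := hcd
    rw [this] at hle
    exact hle
  have hlb : ((minDist C : ℝ) : EReal) ≤ minPW w₂ H := by
    rw [← hmin]
    apply minPW_mono
    intro x hx
    exact h12 x (hcp x hx).1 (hcp x hx).2
  exact le_antisymm hub hlb

/-- For a binary linear code `C`,
`ρ_maxfrac(C) ≥ ρ_AWGNC(C) ≥ ρ_BEC(C)` and `ρ_maxfrac(C) ≥ ρ_BSC(C) ≥ ρ_BEC(C)`,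
as elements of `ℕ ∪ {∞}`. -/
theorem statement1 {n : ℕ} (C : Submodule (ZMod 2) (Fin n → ZMod 2)) :
    pcRedundancy wBEC C ≤ pcRedundancy wAWGNC C ∧
    pcRedundancy wAWGNC C ≤ pcRedundancy wMaxFrac C ∧
    pcRedundancy wBEC C ≤ pcRedundancy wBSC C ∧
    pcRedundancy wBSC C ≤ pcRedundancy wMaxFrac C := by
  refine ⟨?_, ?_, ?_, ?_⟩
  · exact key_red C wAWGNC wBEC (fun x h hn => wAWGNC_le_wBEC h hn)
      (fun x h hn => one_le_wAWGNC h hn) (fun c hc => wBEC_indR hc)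
  · exact key_red C wMaxFrac wAWGNC (fun x h hn => wMaxFrac_le_wAWGNC h hn)
      (fun x h hn => one_le_wMaxFrac h hn) (fun c hc => wAWGNC_indR hc)
  · exact key_red C wBSC wBEC (fun x h hn => wBSC_le_wBEC h hn)
      (fun x h hn => one_le_wBSC h hn) (fun c hc => wBEC_indR hc)
  · exact key_red C wMaxFrac wBSC (fun x h hn => wMaxFrac_le_wBSC h hn)
      (fun x h hn => one_le_wMaxFrac h hn) (fun c hc => wBSC_indR hc)
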